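/- Let α > 1 and x, y ∈ (0,1). If y ≥ x/α and 1 - y ≤ α·(1 - x), then y ≥ x^(log(1+α)/log(1+1/α)). -/

import Mathlib

theorem stmt_0 (α x y : ℝ) (hα : 1 < α) (hx : x ∈ Set.Ioo (0:ℝ) 1)
    (hy : y ∈ Set.Ioo (0:ℝ) 1) (h1 : x / α ≤ y) (h2 : 1 - y ≤ α * (1 - x)) :
    x ^ (Real.log (1 + α) / Real.log (1 + 1 / α)) ≤ y := by
  obtain ⟨hx0, hx1⟩ := hx
  have hα0 : 0 < α := by linarith
  have h1α : (0:ℝ) < 1 + α := by linarith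
  have hinv : 1 / α < α := by
    rw [div_lt_iff₀ hα0]; nlinarith
  have hinv0 : (0:ℝ) < 1 + 1/α := by positivity
  have hlogs : Real.log (1 + 1/α) < Real.log (1 + α) := by
    apply Real.log_lt_log hinv0; linarith
  have hlogp : 0 < Real.log (1 + 1/α) := Real.log_pos (by
    have : 0 < 1/α := by positivity
    linarith)
  set β := Real.log (1 + α) / Real.log (1 + 1/α) with hβ
  have hβ1 : 1 < β := (one_lt_div hlogp).mpr hlogs
  set x₀ : ℝ := α / (1 + α) with hx₀def
  have hx₀pos : 0 < x₀ := by positivity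
  have hx₀inv : x₀ = (1 + 1/α)⁻¹ := by
    rw [hx₀def, show (1:ℝ) + 1/α = (1 + α)/α by field_simp; ring, inv_div]
  have hx₀β : x₀ ^ β = (1 + α)⁻¹ := by
    rw [Real.rpow_def_of_pos hx₀pos, hx₀inv, Real.log_inv]
    have heq : -Real.log (1 + 1/α) * β = -Real.log (1 + α) := by
      rw [neg_mul, mul_comm, hβ, div_mul_cancel₀ _ hlogp.ne']
    rw [heq, Real.exp_neg, Real.exp_log h1α]
  rcases le_total x x₀ with hle | hge
  · -- case x ≤ x₀ : show x^β ≤ x/α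
    have key : x ^ β ≤ x / α := by
      have h1' : x ^ β = x ^ (β - 1) * x := by
        have := Real.rpow_add hx0 (β - 1) 1
        rw [Real.rpow_one] at this
        rw [← this]; norm_num
      have h2' : x ^ (β - 1) ≤ x₀ ^ (β - 1) :=
        Real.rpow_le_rpow hx0.le hle (by linarith)
      have h3' : x₀ ^ (β - 1) = 1 / α := by
        rw [Real.rpow_sub hx₀pos, Real.rpow_one, hx₀β, hx₀def]
        field_simp
      rw [h1']
      calc x ^ (β - 1) * x ≤ (1/α) * x := by
            apply mul_le_mul_of_nonneg_right _ hx0.le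
            rw [← h3']; exact h2'
        _ = x / α := by ring
    linarith
  · -- case x₀ ≤ x : use convexity
    have hconv : ConvexOn ℝ (Set.Ici (0:ℝ)) (fun t : ℝ => t ^ β) :=
      convexOn_rpow hβ1.le
    have hx₀1 : x₀ < 1 := by
      rw [hx₀def, div_lt_one h1α]; linarith
    set a : ℝ := (1 - x) / (1 - x₀) with ha
    set b : ℝ := (x - x₀) / (1 - x₀) with hb
    have hden : 0 < 1 - x₀ := by linarith
    have ha0 : 0 ≤ a := div_nonneg (by linarith) hden.le
    have hb0 : 0 ≤ b := div_nonneg (by linarith) hden.le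
    have hab : a + b = 1 := by
      rw [ha, hb, ← add_div, div_eq_one_iff_eq hden.ne']; ring
    have hcomb : a • x₀ + b • (1:ℝ) = x := by
      simp only [smul_eq_mul, ha, hb]
      field_simp
      ring
    have := hconv.2 (Set.mem_Ici.mpr hx₀pos.le) (Set.mem_Ici.mpr zero_le_one)
      ha0 hb0 hab
    rw [hcomb] at this
    simp only [smul_eq_mul, Real.one_rpow] at this
    have hx₀d : 1 - x₀ = (1 + α)⁻¹ := by
      rw [hx₀def]; field_simp; ring
    have hval : a * x₀ ^ β + b * 1 = α * x - (α - 1) := by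
      rw [hx₀β, ha, hb, hx₀d, hx₀def]
      field_simp
      ring
    calc x ^ β ≤ a * x₀ ^ β + b * 1 := this
      _ = α * x - (α - 1) := hval
      _ ≤ y := by linarith
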